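/- Let A be a nilpotent n×n complex matrix, let H be a Hermitian positive definite n×n matrix, and let A* := H (conjugate-transpose of A) H^{-1} be the adjoint of A with respect to the inner product defined by H. Then |[A,A*]|_H ≥ |A|_H²/2^(n-1), where |M|_H² = tr(M M*) with adjoints taken with respect to H. -/

import Mathlib

open Matrix
open scoped ComplexOrder

/-- The adjoint of a matrix `A` with respect to the inner product `⟨x,y⟩_H = y* H x`
defined by a Hermitian positive definite matrix `H`: `A* = H Aᴴ H⁻¹`. -/
noncomputable def adjWrt {n : ℕ} (H A : Matrix (Fin n) (Fin n) ℂ) :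
    Matrix (Fin n) (Fin n) ℂ :=
  H * Aᴴ * H⁻¹

/-- The squared `H`-norm of a matrix: `|M|_H² = tr (M M*)`, with the adjoint taken with
respect to the Hermitian positive definite matrix `H`. -/
noncomputable def normSqWrt {n : ℕ} (H M : Matrix (Fin n) (Fin n) ℂ) : ℝ :=
  (Matrix.trace (M * adjWrt H M)).re

namespace NilcommAux
open scoped ComplexConjugate
variable {n : ℕ}
/-- squared Frobenius norm -/
noncomputable def Nf {n : ℕ} (X : Matrix (Fin n) (Fin n) ℂ) : ℝ :=
  (Matrix.trace (X * Xᴴ)).re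

lemma trace_mul_conjTranspose (X Y : Matrix (Fin n) (Fin n) ℂ) :
    Matrix.trace (X * Yᴴ) = ∑ a, ∑ b, X a b * conj (Y a b) := by
  simp [Matrix.trace, Matrix.diag, Matrix.mul_apply, Matrix.conjTranspose_apply]

lemma Nf_eq (X : Matrix (Fin n) (Fin n) ℂ) :
    Nf X = ∑ a, ∑ b, Complex.normSq (X a b) := by
  rw [Nf, trace_mul_conjTranspose]
  rw [Complex.re_sum]
  refine Finset.sum_congr rfl fun a _ => ?_
  rw [Complex.re_sum]
  refine Finset.sum_congr rfl fun b _ => ?_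
  rw [Complex.mul_conj, Complex.ofReal_re]

lemma Nf_nonneg (X : Matrix (Fin n) (Fin n) ℂ) : 0 ≤ Nf X := by
  rw [Nf_eq]
  exact Finset.sum_nonneg fun a _ => Finset.sum_nonneg fun b _ => Complex.normSq_nonneg _

lemma Nf_zero : Nf (0 : Matrix (Fin n) (Fin n) ℂ) = 0 := by
  simp [Nf]
/-- right multiplication by a Hermitian idempotent decreases Nf -/
lemma Nf_mul_proj_le (X P : Matrix (Fin n) (Fin n) ℂ) (hPH : Pᴴ = P) (hPP : P * P = P) :
    Nf (X * P) ≤ Nf X := by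
  have key : Nf X = Nf (X * P) + Nf (X * (1 - P)) := by
    have h1 : (X * P) * (X * P)ᴴ = X * P * Xᴴ := by
      rw [conjTranspose_mul, hPH]
      calc X * P * (P * Xᴴ) = X * (P * P) * Xᴴ := by noncomm_ring
        _ = X * P * Xᴴ := by rw [hPP]
    have h2 : (X * (1 - P)) * (X * (1 - P))ᴴ = X * (1 - P) * Xᴴ := by
      have hQH : (1 - P)ᴴ = 1 - P := by simp [conjTranspose_sub, hPH]
      have hQQ : (1 - P) * (1 - P) = 1 - P := by
        simp [Matrix.sub_mul, Matrix.mul_sub, hPP]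
      rw [conjTranspose_mul, hQH]
      calc X * (1 - P) * ((1 - P) * Xᴴ) = X * ((1 - P) * (1 - P)) * Xᴴ := by noncomm_ring
        _ = X * (1 - P) * Xᴴ := by rw [hQQ]
    have : X * P * Xᴴ + X * (1 - P) * Xᴴ = X * Xᴴ := by
      noncomm_ring
    rw [Nf, Nf, Nf, h1, h2, ← Complex.add_re, ← Matrix.trace_add, this]
  have := Nf_nonneg (X * (1 - P))
  linarith [key]
set_option maxHeartbeats 1000000 in
/-- For every matrix M there exists a matrix P (the orthogonal projection onto ker M)
with the listed properties. -/
lemma exists_proj (M : Matrix (Fin n) (Fin n) ℂ) :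
    ∃ P : Matrix (Fin n) (Fin n) ℂ,
      Pᴴ = P ∧ P * P = P ∧ M * P = 0 ∧
      (∀ X : Matrix (Fin n) (Fin n) ℂ, M * X = 0 → P * X = X) ∧
      ∃ d : ℕ, (Matrix.trace P).re = d ∧ (M ≠ 0 → d ≤ n - 1) := by
  classical
  let E := EuclideanSpace ℂ (Fin n)
  let e : E ≃ₗ[ℂ] (Fin n → ℂ) := WithLp.linearEquiv 2 ℂ (Fin n → ℂ)
  let W : Submodule ℂ E := Submodule.comap (e : E →ₗ[ℂ] (Fin n → ℂ)) (LinearMap.ker M.mulVecLin)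
  have hmemW : ∀ x : E, x ∈ W ↔ M.mulVec (e x) = 0 := by
    intro x
    simp [W, LinearMap.mem_ker]
  let d := Module.finrank ℂ W
  let v : Fin d → W := fun i => stdOrthonormalBasis ℂ W i
  let u : Fin d → (Fin n → ℂ) := fun i => e ((v i : E))
  have huW : ∀ i, M.mulVec (u i) = 0 := fun i => (hmemW _).1 (v i).2
  -- the matrix with columns u i
  let U : Matrix (Fin n) (Fin d) ℂ := fun a i => u i a
  have hUU : Uᴴ * U = (1 : Matrix (Fin d) (Fin d) ℂ) := by
    ext i j
    have h := (stdOrthonormalBasis ℂ W).orthonormal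
    rw [orthonormal_iff_ite] at h
    have h2 := h i j
    rw [Submodule.coe_inner, PiLp.inner_apply] at h2
    rw [Matrix.mul_apply]
    simp only [conjTranspose_apply, Matrix.one_apply]
    simp only [U]
    convert h2 using 1
    exact Finset.sum_congr rfl fun k _ => mul_comm _ _
  let P : Matrix (Fin n) (Fin n) ℂ := U * Uᴴ
  have hPH : Pᴴ = P := by
    simp only [P, conjTranspose_mul, conjTranspose_conjTranspose]
  have hPP : P * P = P := by
    show (U * Uᴴ) * (U * Uᴴ) = U * Uᴴ
    calc (U * Uᴴ) * (U * Uᴴ) = U * (Uᴴ * U) * Uᴴ := by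
          rw [Matrix.mul_assoc, Matrix.mul_assoc, Matrix.mul_assoc]
      _ = U * Uᴴ := by rw [hUU, Matrix.mul_one]
  have hMU : M * U = 0 := by
    ext a i
    have := congrFun (huW i) a
    rw [Matrix.mul_apply]
    simpa [Matrix.mul_apply, Matrix.mulVec, dotProduct, U] using this
  have hMP : M * P = 0 := by
    show M * (U * Uᴴ) = 0
    rw [← Matrix.mul_assoc, hMU, Matrix.zero_mul]
  -- P fixes vectors in the kernel
  have hfix : ∀ x : Fin n → ℂ, M.mulVec x = 0 → P.mulVec x = x := by
    intro x hx
    have hxW : (e.symm x) ∈ W := by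
      rw [hmemW]
      simpa using hx
    set w : W := ⟨e.symm x, hxW⟩ with hw
    have hrepr := (stdOrthonormalBasis ℂ W).sum_repr w
    set c : Fin d → ℂ := fun i => (stdOrthonormalBasis ℂ W).repr w i with hc
    have hcoe : ∑ i, c i • ((v i : E)) = e.symm x := by
      have := congrArg (Subtype.val) hrepr
      rw [AddSubmonoidClass.coe_finset_sum] at this
      simpa [v, c] using this
    have hfun : ∑ i, c i • u i = x := by
      have := congrArg e hcoe
      rw [map_sum] at this
      simpa [u, _root_.map_smul] using this
    have hci : ∀ i, c i = ∑ b, conj (u i b) * x b := by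
      intro i
      show (stdOrthonormalBasis ℂ W).repr w i = _
      rw [(stdOrthonormalBasis ℂ W).repr_apply_apply]
      rw [Submodule.coe_inner, PiLp.inner_apply]
      have : ∀ b, (e.symm x : E) b = x b := fun b => rfl
      simp only [u]
      exact Finset.sum_congr rfl fun b _ => mul_comm _ _
    funext a
    have hxa := congrFun hfun a
    rw [Finset.sum_apply] at hxa
    simp only [Pi.smul_apply, smul_eq_mul] at hxa
    rw [Matrix.mulVec, dotProduct]
    simp only [P, Matrix.mul_apply]
    simp only [conjTranspose_apply]
    simp only [U]
    rw [← hxa]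
    simp only [Complex.star_def]
    calc ∑ b, (∑ i, u i a * conj (u i b)) * x b
        = ∑ b, ∑ i, u i a * conj (u i b) * x b := by
          exact Finset.sum_congr rfl fun b _ => Finset.sum_mul _ _ _
      _ = ∑ i, ∑ b, u i a * conj (u i b) * x b := Finset.sum_comm
      _ = ∑ i, c i * u i a := by
          refine Finset.sum_congr rfl fun i _ => ?_
          rw [hci i, Finset.sum_mul]
          exact Finset.sum_congr rfl fun b _ => by ring
  have hfixM : ∀ X : Matrix (Fin n) (Fin n) ℂ, M * X = 0 → P * X = X := by
    intro X hX
    ext a b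
    have : M.mulVec (fun c => X c b) = 0 := by
      funext a'
      have := congrFun (congrFun hX a') b
      simpa [Matrix.mul_apply, Matrix.mulVec, dotProduct] using this
    have h2 := congrFun (hfix _ this) a
    simpa [Matrix.mul_apply, Matrix.mulVec, dotProduct] using h2
  refine ⟨P, hPH, hPP, hMP, hfixM, d, ?_, ?_⟩
  · -- trace
    have h3 : Matrix.trace P = Matrix.trace (Uᴴ * U) := Matrix.trace_mul_comm U Uᴴ
    rw [h3, hUU, Matrix.trace_one]
    simp
  · -- dimension bound
    intro hM
    have hWne : W ≠ ⊤ := by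
      intro htop
      apply hM
      ext a b
      by_contra hab
      have hx : (e.symm (Pi.single b 1)) ∈ W := htop ▸ Submodule.mem_top
      rw [hmemW] at hx
      simp only [LinearEquiv.apply_symm_apply] at hx
      have := congrFun hx a
      rw [Matrix.mulVec_single] at this
      simp at this
      exact hab this
    have : d < n := by
      have h1 : d < Module.finrank ℂ E := Submodule.finrank_lt hWne
      have h2 : Module.finrank ℂ E = n := by simp [E]
      omega
    omega
/-- Cauchy-Schwarz for the trace. -/
lemma re_trace_mul_le (P C : Matrix (Fin n) (Fin n) ℂ) (hC : Cᴴ = C) :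
    (Matrix.trace (P * C)).re ≤ Real.sqrt (Nf P) * Real.sqrt (Nf C) := by
  have h1 : Matrix.trace (P * C) = ∑ a, ∑ b, P a b * conj (C a b) := by
    conv_lhs => rw [← hC]
    exact trace_mul_conjTranspose P C
  have h2 : (Matrix.trace (P * C)).re ≤ ∑ a, ∑ b, ‖P a b‖ * ‖C a b‖ := by
    rw [h1, Complex.re_sum]
    refine Finset.sum_le_sum fun a _ => ?_
    rw [Complex.re_sum]
    refine Finset.sum_le_sum fun b _ => ?_
    calc (P a b * conj (C a b)).re ≤ ‖P a b * conj (C a b)‖ := Complex.re_le_norm _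
      _ = ‖P a b‖ * ‖C a b‖ := by
          rw [norm_mul, Complex.norm_conj]
  refine h2.trans ?_
  have hcs := Finset.sum_mul_sq_le_sq_mul_sq Finset.univ
    (fun p : Fin n × Fin n => ‖P p.1 p.2‖)
    (fun p : Fin n × Fin n => ‖C p.1 p.2‖)
  have hP : ∑ p : Fin n × Fin n, ‖P p.1 p.2‖ ^ 2 = Nf P := by
    rw [Nf_eq, ← Fintype.sum_prod_type']
    exact Finset.sum_congr rfl fun p _ => Complex.sq_norm _
  have hQ : ∑ p : Fin n × Fin n, ‖C p.1 p.2‖ ^ 2 = Nf C := by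
    rw [Nf_eq, ← Fintype.sum_prod_type']
    exact Finset.sum_congr rfl fun p _ => Complex.sq_norm _
  rw [hP, hQ] at hcs
  have hflat : ∑ a, ∑ b, ‖P a b‖ * ‖C a b‖
      = ∑ p : Fin n × Fin n, ‖P p.1 p.2‖ * ‖C p.1 p.2‖ :=
    (Fintype.sum_prod_type' _).symm
  rw [hflat]
  set L := ∑ p : Fin n × Fin n, ‖P p.1 p.2‖ * ‖C p.1 p.2‖ with hL
  have hLnn : 0 ≤ L := Finset.sum_nonneg fun p _ => by positivity
  calc L = Real.sqrt (L ^ 2) := (Real.sqrt_sq hLnn).symm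
    _ ≤ Real.sqrt (Nf P * Nf C) := Real.sqrt_le_sqrt hcs
    _ = Real.sqrt (Nf P) * Real.sqrt (Nf C) := Real.sqrt_mul (Nf_nonneg P) _

lemma cube_le_four_pow : ∀ m : ℕ, m ^ 3 ≤ 4 ^ m := by
  intro m
  induction m with
  | zero => decide
  | succ k ih =>
    rcases Nat.lt_or_ge k 2 with h | h
    · interval_cases k <;> decide
    · have ha : 2 * (k * k) ≤ k * (k * k) := Nat.mul_le_mul_right (k*k) h
      have hb : 2 * k ≤ k * k := Nat.mul_le_mul_right k h
      have h4 : (k + 1) ^ 3 ≤ 4 * k ^ 3 := by nlinarith [ha, hb, h]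
      calc (k + 1) ^ 3 ≤ 4 * k ^ 3 := h4
        _ ≤ 4 * 4 ^ k := by
            have := ih
            omega
        _ = 4 ^ (k + 1) := by ring

lemma nat_mul_sqrt_le (m : ℕ) : (m : ℝ) * Real.sqrt m ≤ 2 ^ m := by
  have h3 : ((m : ℝ)) ^ 3 ≤ (4 : ℝ) ^ m := by
    exact_mod_cast cube_le_four_pow m
  have lhs_nonneg : 0 ≤ (m : ℝ) * Real.sqrt m := by positivity
  have hsq : ((m : ℝ) * Real.sqrt m) ^ 2 = (m : ℝ) ^ 3 := by
    rw [mul_pow, Real.sq_sqrt (by positivity : (0:ℝ) ≤ (m:ℝ))]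
    ring
  calc (m : ℝ) * Real.sqrt m = Real.sqrt (((m : ℝ) * Real.sqrt m) ^ 2) :=
        (Real.sqrt_sq lhs_nonneg).symm
    _ ≤ Real.sqrt ((4 : ℝ) ^ m) := by
        apply Real.sqrt_le_sqrt
        rw [hsq]
        exact h3
    _ = 2 ^ m := by
        rw [show (4 : ℝ) ^ m = ((2:ℝ) ^ m) ^ 2 by rw [← pow_mul, mul_comm, pow_mul]; norm_num]
        exact Real.sqrt_sq (by positivity)
lemma trace_proj_mul (P X : Matrix (Fin n) (Fin n) ℂ) (hPP : P * P = P) :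
    Matrix.trace ((P * X) * (Xᴴ * P)) = Matrix.trace (P * (X * Xᴴ)) := by
  have m1 : (P * X) * (Xᴴ * P) = P * ((X * Xᴴ) * P) := by noncomm_ring
  rw [m1, Matrix.trace_mul_comm]
  have m2 : (X * Xᴴ * P) * P = (X * Xᴴ) * (P * P) := by noncomm_ring
  rw [m2, hPP, Matrix.trace_mul_comm]

lemma trace_mul_proj (P X : Matrix (Fin n) (Fin n) ℂ) (hPP : P * P = P) :
    Matrix.trace ((X * P) * (P * Xᴴ)) = Matrix.trace (P * (Xᴴ * X)) := by
  have m1 : (X * P) * (P * Xᴴ) = X * ((P * P) * Xᴴ) := by noncomm_ring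
  rw [m1, hPP, Matrix.trace_mul_comm]
  have m2 : (P * Xᴴ) * X = P * (Xᴴ * X) := by noncomm_ring
  rw [m2]

lemma core (B : Matrix (Fin n) (Fin n) ℂ) (hB : B ^ n = 0) :
    Real.sqrt (Nf (B * Bᴴ - Bᴴ * B)) ≥ Nf B / 2 ^ (n - 1) := by
  classical
  set C := B * Bᴴ - Bᴴ * B with hCdef
  have hCH : Cᴴ = C := by
    rw [hCdef, conjTranspose_sub, conjTranspose_mul, conjTranspose_mul,
      conjTranspose_conjTranspose]
  rcases le_or_gt (Nf B) 0 with hNB | hNB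
  · have h1 : Nf B / 2 ^ (n - 1) ≤ 0 := by
      apply div_nonpos_of_nonpos_of_nonneg hNB
      positivity
    exact le_trans h1 (Real.sqrt_nonneg _)
  have hn2 : 2 ≤ n := by
    by_contra hlt
    push_neg at hlt
    interval_cases n
    · rw [Nf_eq] at hNB
      simp at hNB
    · rw [pow_one] at hB
      rw [hB, Nf_zero] at hNB
      exact lt_irrefl 0 hNB
  -- projections onto ker (B ^ k)
  choose P hPH hPP hMP hfix hd using fun k : ℕ => exists_proj (B ^ k)
  have htrC : (Matrix.trace C).re = 0 := by
    rw [hCdef, Matrix.trace_sub, Matrix.trace_mul_comm]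
    simp
  set s : ℕ → ℝ := fun k => (Matrix.trace (P k * C)).re with hsdef
  set g : ℕ → ℝ := fun k => Nf (P k * B) with hgdef
  -- step A : s k = Nf (P k * B) - Nf (B * P k)
  have stepA : ∀ k, s k = g k - Nf (B * P k) := by
    intro k
    have e1 : Nf (P k * B) = (Matrix.trace (P k * (B * Bᴴ))).re := by
      rw [Nf, conjTranspose_mul, hPH k]
      exact congrArg Complex.re (trace_proj_mul (P k) B (hPP k))
    have e2 : Nf (B * P k) = (Matrix.trace (P k * (Bᴴ * B))).re := by
      rw [Nf, conjTranspose_mul, hPH k]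
      exact congrArg Complex.re (trace_mul_proj (P k) B (hPP k))
    have e3 : P k * C = P k * (B * Bᴴ) - P k * (Bᴴ * B) := by
      rw [hCdef, Matrix.mul_sub]
    simp only [hsdef, hgdef]
    rw [e3, Matrix.trace_sub, Complex.sub_re, e1, e2]
  -- step B : s (k+1) ≥ g (k+1) - g k
  have stepB : ∀ k, g (k + 1) - g k ≤ s (k + 1) := by
    intro k
    have hz : B ^ k * (B * P (k + 1)) = 0 := by
      rw [← Matrix.mul_assoc, ← pow_succ, hMP (k + 1)]
    have hfixed : P k * (B * P (k + 1)) = B * P (k + 1) := hfix k _ hz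
    have h1 : Nf (B * P (k + 1)) ≤ g k := by
      have h2 : B * P (k + 1) = (P k * B) * P (k + 1) := by
        rw [Matrix.mul_assoc, hfixed]
      rw [h2]
      exact Nf_mul_proj_le (P k * B) (P (k + 1)) (hPH (k + 1)) (hPP (k + 1))
    rw [stepA (k + 1)]
    linarith
  -- telescoping
  have tele : ∑ k ∈ Finset.range n, (g (k + 1) - g k) = g n - g 0 :=
    Finset.sum_range_sub g n
  have hgn : g n = Nf B := by
    have h1 : P n * B = B := hfix n B (by rw [hB, Matrix.zero_mul])
    simp only [hgdef]
    rw [h1]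
  have hg0 : g 0 = 0 := by
    have h1 : P 0 = 0 := by
      have := hMP 0
      rwa [pow_zero, Matrix.one_mul] at this
    simp only [hgdef]
    rw [h1, Matrix.zero_mul, Nf_zero]
  have hsn : s n = 0 := by
    have h1 : P n = 1 := by
      have := hfix n 1 (by rw [hB, Matrix.zero_mul])
      rwa [Matrix.mul_one] at this
    simp only [hsdef]
    rw [h1, Matrix.one_mul, htrC]
  have hsum : Nf B ≤ ∑ k ∈ Finset.range n, s (k + 1) := by
    calc Nf B = g n - g 0 := by rw [hgn, hg0, sub_zero]
      _ = ∑ k ∈ Finset.range n, (g (k + 1) - g k) := tele.symm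
      _ ≤ ∑ k ∈ Finset.range n, s (k + 1) := Finset.sum_le_sum fun k _ => stepB k
  set m := n - 1 with hm
  have hnm : n = m + 1 := by omega
  have hm1 : 1 ≤ m := by omega
  have hmpos : (0 : ℝ) < m := by exact_mod_cast hm1
  have hsum2 : Nf B ≤ ∑ k ∈ Finset.range m, s (k + 1) := by
    have h1 : ∑ k ∈ Finset.range n, s (k + 1)
        = ∑ k ∈ Finset.range m, s (k + 1) + s (m + 1) := by
      rw [hnm, Finset.sum_range_succ]
    have h2 : s (m + 1) = s n := by rw [← hnm]
    rw [h1, h2, hsn, add_zero] at hsum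
    exact hsum
  -- pigeonhole
  have hpigeon : ∃ k ∈ Finset.range m, Nf B / m ≤ s (k + 1) := by
    by_contra hcon
    push_neg at hcon
    have hne : (Finset.range m).Nonempty := by
      rw [Finset.nonempty_range_iff]
      omega
    have hlt : ∑ k ∈ Finset.range m, s (k + 1) < ∑ _k ∈ Finset.range m, Nf B / m :=
      Finset.sum_lt_sum_of_nonempty hne fun k hk => hcon k hk
    rw [Finset.sum_const, Finset.card_range, nsmul_eq_mul] at hlt
    have heq : (m : ℝ) * (Nf B / m) = Nf B := by
      field_simp
    rw [heq] at hlt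
    linarith
  obtain ⟨k, _hkmem, hks⟩ := hpigeon
  have hdivpos : 0 < Nf B / m := div_pos hNB hmpos
  have hspos : 0 < s (k + 1) := lt_of_lt_of_le hdivpos hks
  have hBk : B ^ (k + 1) ≠ 0 := by
    intro h0
    have h1 : P (k + 1) = 1 := by
      have := hfix (k + 1) 1 (by rw [h0, Matrix.zero_mul])
      rwa [Matrix.mul_one] at this
    have h2 : s (k + 1) = 0 := by
      simp only [hsdef]
      rw [h1, Matrix.one_mul, htrC]
    linarith
  obtain ⟨d, hdtr, hdle⟩ := hd (k + 1)
  have hdm : d ≤ m := hdle hBk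
  have hNfP : Nf (P (k + 1)) = d := by
    rw [Nf, hPH (k + 1), hPP (k + 1)]
    exact hdtr
  have hcs : s (k + 1) ≤ Real.sqrt (Nf (P (k + 1))) * Real.sqrt (Nf C) :=
    re_trace_mul_le (P (k + 1)) C hCH
  have hsqle : Real.sqrt (Nf (P (k + 1))) ≤ Real.sqrt m := by
    rw [hNfP]
    apply Real.sqrt_le_sqrt
    exact_mod_cast hdm
  have h6 : Nf B / m ≤ Real.sqrt m * Real.sqrt (Nf C) := by
    calc Nf B / m ≤ s (k + 1) := hks
      _ ≤ Real.sqrt (Nf (P (k + 1))) * Real.sqrt (Nf C) := hcs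
      _ ≤ Real.sqrt m * Real.sqrt (Nf C) :=
          mul_le_mul_of_nonneg_right hsqle (Real.sqrt_nonneg _)
  have h7 : Nf B ≤ 2 ^ m * Real.sqrt (Nf C) := by
    have h8 : Nf B ≤ (Real.sqrt m * Real.sqrt (Nf C)) * m := (div_le_iff₀ hmpos).1 h6
    have h9 : (Real.sqrt m * Real.sqrt (Nf C)) * m
        = ((m : ℝ) * Real.sqrt m) * Real.sqrt (Nf C) := by ring
    have h10 : ((m : ℝ) * Real.sqrt m) * Real.sqrt (Nf C) ≤ 2 ^ m * Real.sqrt (Nf C) :=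
      mul_le_mul_of_nonneg_right (nat_mul_sqrt_le m) (Real.sqrt_nonneg _)
    linarith
  rw [ge_iff_le, div_le_iff₀ (by positivity : (0:ℝ) < 2 ^ m)]
  linarith

end NilcommAux

/-- Let `A` be a nilpotent `n × n` complex matrix and `H` a Hermitian positive definite
matrix; let `A* = H Aᴴ H⁻¹` be the adjoint of `A` with respect to `H`.  Then
`|[A,A*]|_H ≥ |A|_H² / 2^(n-1)`. -/
theorem stmt_1 (n : ℕ) (A H : Matrix (Fin n) (Fin n) ℂ)
    (hH : H.PosDef) (hnil : A ^ n = 0) :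
    Real.sqrt (normSqWrt H (A * adjWrt H A - adjWrt H A * A))
      ≥ normSqWrt H A / 2 ^ (n - 1) := by
  have hps := hH.posSemidef
  open scoped MatrixOrder in
  set S := CFC.sqrt H with hSdef
  have hS2 : S * S = H := by
    open scoped MatrixOrder in exact CFC.sqrt_mul_sqrt_self H hps.nonneg
  have hSH : Sᴴ = S := by
    open scoped MatrixOrder in exact (CFC.sqrt_nonneg H).posSemidef.1
  have hdet : IsUnit S.det := by
    have h1 : IsUnit H.det := (Matrix.isUnit_iff_isUnit_det H).1 hH.isUnit
    rw [← hS2, Matrix.det_mul] at h1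
    exact isUnit_of_mul_isUnit_left h1
  have hSi : S * S⁻¹ = 1 := Matrix.mul_nonsing_inv S hdet
  have hiS : S⁻¹ * S = 1 := Matrix.nonsing_inv_mul S hdet
  have hiH : (S⁻¹)ᴴ = S⁻¹ := by
    rw [Matrix.conjTranspose_nonsing_inv, hSH]
  set B := S⁻¹ * A * S with hBdef
  have hA : A = S * B * S⁻¹ := by
    rw [hBdef]
    calc A = (S * S⁻¹) * A * (S * S⁻¹) := by rw [hSi, Matrix.one_mul, Matrix.mul_one]
      _ = S * (S⁻¹ * A * S) * S⁻¹ := by noncomm_ring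
  have key1 : ∀ X : Matrix (Fin n) (Fin n) ℂ, adjWrt H (S * X * S⁻¹) = S * Xᴴ * S⁻¹ := by
    intro X
    rw [adjWrt, conjTranspose_mul, conjTranspose_mul, hiH, hSH, ← hS2, Matrix.mul_inv_rev]
    calc S * S * (S⁻¹ * (Xᴴ * S)) * (S⁻¹ * S⁻¹)
        = S * (S * S⁻¹) * Xᴴ * (S * S⁻¹) * S⁻¹ := by noncomm_ring
      _ = S * Xᴴ * S⁻¹ := by rw [hSi, Matrix.mul_one, Matrix.mul_one]
  have key2 : ∀ X : Matrix (Fin n) (Fin n) ℂ,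
      Matrix.trace (S * X * S⁻¹) = Matrix.trace X := by
    intro X
    rw [Matrix.trace_mul_comm (S * X) S⁻¹, ← Matrix.mul_assoc, hiS, Matrix.one_mul]
  have conj_mul : ∀ X Y : Matrix (Fin n) (Fin n) ℂ,
      (S * X * S⁻¹) * (S * Y * S⁻¹) = S * (X * Y) * S⁻¹ := by
    intro X Y
    calc (S * X * S⁻¹) * (S * Y * S⁻¹) = S * X * (S⁻¹ * S) * Y * S⁻¹ := by noncomm_ring
      _ = S * (X * Y) * S⁻¹ := by rw [hiS, Matrix.mul_one]; noncomm_ring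
  have key3 : ∀ X : Matrix (Fin n) (Fin n) ℂ, normSqWrt H (S * X * S⁻¹) = NilcommAux.Nf X := by
    intro X
    rw [normSqWrt, key1 X, conj_mul, key2]
    rfl
  have hBn : B ^ n = 0 := by
    have hpow : ∀ k : ℕ, B ^ k = S⁻¹ * A ^ k * S := by
      intro k
      induction k with
      | zero => rw [pow_zero, pow_zero, Matrix.mul_one, hiS]
      | succ k ih =>
        rw [pow_succ, ih, pow_succ, hBdef]
        calc S⁻¹ * A ^ k * S * (S⁻¹ * A * S)
            = S⁻¹ * A ^ k * (S * S⁻¹) * A * S := by noncomm_ring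
          _ = S⁻¹ * (A ^ k * A) * S := by rw [hSi, Matrix.mul_one]; noncomm_ring
    rw [hpow n, hnil, Matrix.mul_zero, Matrix.zero_mul]
  have hcomm : A * adjWrt H A - adjWrt H A * A = S * (B * Bᴴ - Bᴴ * B) * S⁻¹ := by
    rw [hA, key1 B, conj_mul, conj_mul, Matrix.mul_sub, Matrix.sub_mul]
  rw [hcomm, key3, hA, key3]
  exact NilcommAux.core B hBn
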